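/- (Kreisselmeier extended regression.) Let ψ : ℝ → EuclideanSpace ℝ (Fin n) be continuous, θ ∈ EuclideanSpace ℝ (Fin n), and ρ > 0. Suppose Φ : ℝ → Matrix (Fin n) (Fin n) ℝ and Y : ℝ → EuclideanSpace ℝ (Fin n) are differentiable with Φ'(t) = −ρ • Φ(t) + vecMulVec (ψ(t)) (ψ(t)) and Y'(t) = −ρ • Y(t) + ⟪ψ(t), θ⟫ • ψ(t) for all t ≥ 0, with Φ(0) = 0 and Y(0) = 0. Then Y(t) = Φ(t) *ᵥ θ for all t ≥ 0. -/

import Mathlib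

open Matrix
open scoped RealInnerProductSpace

attribute [local instance] Matrix.normedAddCommGroup Matrix.normedSpace

/-- The underlying plain vector of a point of `EuclideanSpace ℝ (Fin n)`. -/
def ev {n : ℕ} (x : EuclideanSpace ℝ (Fin n)) : Fin n → ℝ :=
  (WithLp.equiv 2 (Fin n → ℝ)) x

lemma vecMulVec_mulVec' {n : ℕ} (a b v : Fin n → ℝ) :
    vecMulVec a b *ᵥ v = (b ⬝ᵥ v) • a := by
  funext i
  simp [Matrix.mulVec, Matrix.vecMulVec, dotProduct, Finset.mul_sum, mul_assoc,
    mul_comm, mul_left_comm]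

/-- Kreisselmeier extended regression: the LTV filter
`Φ̇ = −ρΦ + ψψᵀ`, `Ẏ = −ρY + ψ⟪ψ,θ⟫` with zero initial conditions yields the
extended linear regression equation `Y = Φ θ`. -/
theorem stmt15 {n : ℕ} (ψ : ℝ → EuclideanSpace ℝ (Fin n)) (hψ : Continuous ψ)
    (θ : EuclideanSpace ℝ (Fin n)) (ρ : ℝ) (hρ : 0 < ρ)
    (Φ : ℝ → Matrix (Fin n) (Fin n) ℝ)
    (Y : ℝ → EuclideanSpace ℝ (Fin n))
    (hΦ : Differentiable ℝ Φ) (hY : Differentiable ℝ Y)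
    (hΦd : ∀ t ≥ (0:ℝ), deriv Φ t = (-ρ) • Φ t + vecMulVec (ev (ψ t)) (ev (ψ t)))
    (hYd : ∀ t ≥ (0:ℝ), deriv Y t = (-ρ) • Y t + ⟪ψ t, θ⟫ • ψ t)
    (hΦ0 : Φ 0 = 0) (hY0 : Y 0 = 0) :
    ∀ t ≥ (0:ℝ), ev (Y t) = Φ t *ᵥ ev θ := by
  -- linear maps
  let e : EuclideanSpace ℝ (Fin n) ≃L[ℝ] (Fin n → ℝ) := EuclideanSpace.equiv (Fin n) ℝ
  let L : Matrix (Fin n) (Fin n) ℝ →ₗ[ℝ] (Fin n → ℝ) :=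
    { toFun := fun M => M *ᵥ ev θ
      map_add' := fun M N => Matrix.add_mulVec M N (ev θ)
      map_smul' := fun a M => Matrix.smul_mulVec a M (ev θ) }
  let L' : Matrix (Fin n) (Fin n) ℝ →L[ℝ] (Fin n → ℝ) := L.toContinuousLinearMap
  -- the error function
  set g : ℝ → Fin n → ℝ := fun t => ev (Y t) - Φ t *ᵥ ev θ with hg
  have hgderiv : ∀ t ≥ (0:ℝ), HasDerivAt g ((-ρ) • g t) t := by
    intro t ht
    have h1 : HasDerivAt (fun t => ev (Y t)) (ev (deriv Y t)) t :=
      (e.toContinuousLinearMap.hasFDerivAt.comp_hasDerivAt t (hY t).hasDerivAt)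
    have h2 : HasDerivAt (fun t => Φ t *ᵥ ev θ) (deriv Φ t *ᵥ ev θ) t :=
      (L'.hasFDerivAt.comp_hasDerivAt t (hΦ t).hasDerivAt)
    have h3 := h1.sub h2
    convert h3 using 1
    iterate 4 rfl
    rw [hΦd t ht, hYd t ht]
    have hinner : ⟪ψ t, θ⟫ = ev (ψ t) ⬝ᵥ ev θ := by
      simp [ev, dotProduct, PiLp.inner_apply, RCLike.inner_apply, mul_comm]
    have hev : ∀ (a : ℝ) (x y : EuclideanSpace ℝ (Fin n)),
        ev (a • x + y) = a • ev x + ev y := fun a x y => rfl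
    have hevs : ∀ (a : ℝ) (x : EuclideanSpace ℝ (Fin n)), ev (a • x) = a • ev x :=
      fun a x => rfl
    rw [hev, Matrix.add_mulVec, Matrix.smul_mulVec, vecMulVec_mulVec', hinner, hg]
    simp only [smul_sub, hevs]
    abel
  have hgc : Continuous g := by
    have : Continuous fun t => ev (Y t) := (e.continuous.comp hY.continuous)
    exact this.sub ((L'.continuous.comp hΦ.continuous))
  -- f t = exp (ρ t) • g t has zero derivative on [0, ∞)
  intro T hT
  set f : ℝ → Fin n → ℝ := fun t => Real.exp (ρ * t) • g t with hf
  have hfderiv : ∀ t ∈ Set.Ico (0:ℝ) T, HasDerivWithinAt f 0 (Set.Ici t) t := by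
    intro t ht
    have hexp : HasDerivAt (fun t => Real.exp (ρ * t)) (ρ * Real.exp (ρ * t)) t := by
      have := (Real.hasDerivAt_exp (ρ * t)).comp t ((hasDerivAt_id t).const_mul ρ)
      simpa [mul_comm, Function.comp_def] using this
    have := hexp.smul (hgderiv t ht.1)
    have h0 : Real.exp (ρ * t) • (-ρ) • g t + (ρ * Real.exp (ρ * t)) • g t = 0 := by
      have hc : Real.exp (ρ * t) * -ρ + ρ * Real.exp (ρ * t) = 0 := by ring
      rw [smul_smul, ← add_smul, hc, zero_smul]
    exact (h0 ▸ this).hasDerivWithinAt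
  have hconst := constant_of_has_deriv_right_zero
    (f := f) (a := 0) (b := T)
    ((Real.continuous_exp.comp (continuous_const.mul continuous_id)).smul hgc).continuousOn
    hfderiv
  have hfT := hconst T (Set.mem_Icc.mpr ⟨hT, le_refl T⟩)
  have hf0 : f 0 = 0 := by
    simp [hf, hg, hY0, hΦ0, ev]
  rw [hf0] at hfT
  have : g T = 0 := by
    have hne : Real.exp (ρ * T) ≠ 0 := (Real.exp_pos _).ne'
    have := congrArg (fun x => (Real.exp (ρ * T))⁻¹ • x) hfT
    simpa [hf, smul_smul, hne] using this
  have := sub_eq_zero.mp this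
  exact this
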